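/- Suppose there exists δ > 0 such that p_i > δ for all i ≥ 1. Then there exists a real number R > 1 such that for every z ∈ ℂ and every nonnegative integer k, if |q_{F_k}(z)| > R then the sequence (q_{F_n}(z))_{n≥0} is unbounded; in fact any R with R > 2/δ − 1 works. -/

import Mathlib

/-- `rr p n = r_n = p (⌊(n+1)/2⌋ + 1)`. -/
noncomputable def rr (p : ℕ → ℝ) (n : ℕ) : ℝ := p ((n+1)/2 + 1)

/-- `qF p z n = q_{F_n}(z)`. -/
noncomputable def qF (p : ℕ → ℝ) (z : ℂ) : ℕ → ℂ
  | 0 => (z - (1 - (p 1 : ℂ))) / (p 1 : ℂ)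
  | 1 => (1 / (p 2 : ℂ)) * (qF p z 0) ^ 2 - (1 / (p 2 : ℂ) - 1)
  | (n+2) => (1 / (rr p (n+2) : ℂ)) * qF p z (n+1) * qF p z n - (1 / (rr p (n+2) : ℂ) - 1)

set_option maxHeartbeats 400000

lemma qF_rel (p : ℕ → ℝ) (z : ℂ) (n : ℕ) :
    qF p z (n+2) = (1 / (rr p (n+2) : ℂ)) * qF p z (n+1) * qF p z n - (1 / (rr p (n+2) : ℂ) - 1) := rfl

lemma qF_rel1 (p : ℕ → ℝ) (z : ℂ) :
    qF p z 1 = (1 / (p 2 : ℂ)) * qF p z 0 * qF p z 0 - (1 / (p 2 : ℂ) - 1) := by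
  show (1 / (p 2 : ℂ)) * (qF p z 0) ^ 2 - (1 / (p 2 : ℂ) - 1) = _
  ring

lemma prod_eq {r : ℝ} (hr : 0 < r) {u v w : ℂ}
    (h : w = (1/(r:ℂ)) * u * v - (1/(r:ℂ) - 1)) :
    u * v = (r:ℂ) * w + (1 - (r:ℂ)) := by
  have hr' : (r:ℂ) ≠ 0 := by exact_mod_cast hr.ne'
  field_simp at h
  linear_combination -h

lemma norm_up {r : ℝ} (hr0 : 0 < r) (hr1 : r ≤ 1) {u v w : ℂ}
    (h : u * v = (r:ℂ) * w + (1 - (r:ℂ))) :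
    ‖u‖ * ‖v‖ ≤ r * ‖w‖ + (1 - r) := by
  have h1 : ‖u‖ * ‖v‖ = ‖u * v‖ := (norm_mul u v).symm
  rw [h1, h]
  calc ‖(r:ℂ) * w + (1 - (r:ℂ))‖ ≤ ‖(r:ℂ) * w‖ + ‖(1 - (r:ℂ))‖ := norm_add_le _ _
    _ = r * ‖w‖ + (1 - r) := by
        rw [norm_mul]
        have : ((1:ℂ) - (r:ℂ)) = (((1 - r : ℝ)) : ℂ) := by push_cast; ring
        rw [this, Complex.norm_real, Complex.norm_real, Real.norm_eq_abs, Real.norm_eq_abs,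
          abs_of_pos hr0, abs_of_nonneg (by linarith)]

lemma norm_down {r : ℝ} (hr0 : 0 < r) (hr1 : r ≤ 1) {u v w : ℂ}
    (h : u * v = (r:ℂ) * w + (1 - (r:ℂ))) :
    r * ‖w‖ ≤ ‖u‖ * ‖v‖ + (1 - r) := by
  have h2 : (r:ℂ) * w = u * v - (1 - (r:ℂ)) := by rw [h]; ring
  have h3 : r * ‖w‖ = ‖(r:ℂ) * w‖ := by
    rw [norm_mul, Complex.norm_real, Real.norm_eq_abs, abs_of_pos hr0]
  rw [h3, h2]
  calc ‖u * v - (1 - (r:ℂ))‖ ≤ ‖u * v‖ + ‖(1 - (r:ℂ))‖ := norm_sub_le _ _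
    _ = ‖u‖ * ‖v‖ + (1 - r) := by
        rw [norm_mul]
        have : ((1:ℂ) - (r:ℂ)) = (((1 - r : ℝ)) : ℂ) := by push_cast; ring
        rw [this, Complex.norm_real, Real.norm_eq_abs, abs_of_nonneg (by linarith)]

/-- growth: if the product of two consecutive norms is ≥ 1 it bounds the next norm below. -/
lemma grow_aux {r : ℝ} (hr0 : 0 < r) (hr1 : r ≤ 1) {u v w : ℂ}
    (h : u * v = (r:ℂ) * w + (1 - (r:ℂ))) (hx : 1 ≤ ‖u‖ * ‖v‖) :
    ‖u‖ * ‖v‖ ≤ ‖w‖ := by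
  have := norm_up hr0 hr1 h
  nlinarith [mul_nonneg (sub_nonneg.2 hr1) (sub_nonneg.2 hx)]

/-- backward: product of two previous norms is bounded below. -/
lemma back_aux {r δ : ℝ} (hr0 : 0 < r) (hr1 : r ≤ 1) (hδr : δ ≤ r) {u v w : ℂ}
    (h : u * v = (r:ℂ) * w + (1 - (r:ℂ))) :
    δ * (‖w‖ + 1) - 1 ≤ ‖u‖ * ‖v‖ := by
  have := norm_down hr0 hr1 h
  nlinarith [norm_nonneg w, mul_nonneg (sub_nonneg.2 hδr) (by positivity : (0:ℝ) ≤ ‖w‖ + 1)]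

/-- Suppose `p i > δ > 0` for all `i ≥ 1`.  Then there is `R > 1`
such that whenever `|q_{F_k}(z)| > R` for some `k`, the sequence `(q_{F_n}(z))ₙ` is
unbounded; in fact any `R > 2/δ - 1` works. -/
theorem stmt13 (p : ℕ → ℝ) (hp : ∀ i, 1 ≤ i → 0 < p i ∧ p i ≤ 1)
    (δ : ℝ) (hδ : 0 < δ) (hpδ : ∀ i, 1 ≤ i → δ < p i) :
    (∃ R : ℝ, 1 < R ∧ ∀ z : ℂ, ∀ k : ℕ, R < ‖qF p z k‖ →
      ¬ ∃ C : ℝ, ∀ n : ℕ, ‖qF p z n‖ ≤ C) ∧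
    (∀ R : ℝ, 2/δ - 1 < R → ∀ z : ℂ, ∀ k : ℕ, R < ‖qF p z k‖ →
      ¬ ∃ C : ℝ, ∀ n : ℕ, ‖qF p z n‖ ≤ C) := by
  have hδ1 : δ < 1 := lt_of_lt_of_le (hpδ 1 le_rfl) (hp 1 le_rfl).2
  have main : ∀ R : ℝ, 2/δ - 1 < R → ∀ z : ℂ, ∀ k : ℕ, R < ‖qF p z k‖ →
      ¬ ∃ C : ℝ, ∀ n : ℕ, ‖qF p z n‖ ≤ C := by
    intro R hR z k hk
    rintro ⟨C, hC⟩
    set a : ℕ → ℝ := fun n => ‖qF p z n‖ with ha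
    have hbdd : BddAbove (Set.range a) := ⟨C, by rintro x ⟨n, rfl⟩; exact hC n⟩
    set M : ℝ := sSup (Set.range a) with hM
    have hMn : ∀ n, a n ≤ M := fun n => le_csSup hbdd ⟨n, rfl⟩
    have hRM : R < M := lt_of_lt_of_le hk (hMn k)
    -- basic numeric facts
    have hδR : 2 < δ * (R + 1) := by
      have h1 : δ * (2/δ) = 2 := by field_simp
      nlinarith
    have hR1 : 1 < R := by nlinarith
    have hM1 : 1 < M := lt_trans hR1 hRM
    have hM0 : 0 < M := by linarith
    have hβ : 1 < δ * (M + 1) - 1 := by nlinarith [mul_nonneg hδ.le (sub_nonneg.2 hRM.le)]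
    have hβM : δ * (M + 1) - 1 ≤ M := by nlinarith [mul_nonneg (by linarith : (0:ℝ) ≤ 1 - δ) (by linarith : (0:ℝ) ≤ M + 1)]
    -- the eighth root γ
    set γ : ℝ := (δ * (M + 1) - 1) ^ ((8:ℝ)⁻¹) with hγdef
    have hβ0 : (0:ℝ) < δ * (M + 1) - 1 := by linarith
    have hγ1 : 1 < γ := by
      rw [hγdef]
      rw [Real.one_lt_rpow_iff_of_pos hβ0]
      norm_num
      linarith
    have hγ0 : 0 < γ := by linarith
    have hγ8 : γ ^ (8:ℕ) = δ * (M + 1) - 1 := by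
      rw [hγdef, ← Real.rpow_natCast (_ ^ _), ← Real.rpow_mul hβ0.le]
      norm_num
    have hγ8M : γ ^ 8 ≤ M := by rw [hγ8]; exact hβM
    have hγM : γ ≤ M := le_trans (le_self_pow₀ hγ1.le (by norm_num)) hγ8M
    -- pick m with a m close to M
    set t : ℝ := M / γ with htdef
    have htγ : t * γ = M := div_mul_cancel₀ M hγ0.ne'
    have ht1 : 1 ≤ t := (one_le_div hγ0).2 hγM
    have htM : t < M := div_lt_self hM0 hγ1
    obtain ⟨x, ⟨m, rfl⟩, hm⟩ : ∃ x ∈ Set.range a, t < x :=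
      exists_lt_of_lt_csSup ⟨a 0, ⟨0, rfl⟩⟩ htM
    -- the recursion facts
    have hrr : ∀ n : ℕ, 0 < rr p (n+2) ∧ rr p (n+2) ≤ 1 ∧ δ ≤ rr p (n+2) := by
      intro n
      have h1 : 1 ≤ (n+2+1)/2 + 1 := Nat.le_add_left 1 _
      exact ⟨(hp _ h1).1, (hp _ h1).2, (hpδ _ h1).le⟩
    have hp2 : 0 < p 2 ∧ p 2 ≤ 1 ∧ δ ≤ p 2 :=
      ⟨(hp 2 (by norm_num)).1, (hp 2 (by norm_num)).2, (hpδ 2 (by norm_num)).le⟩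
    have hEq : ∀ n : ℕ, qF p z (n+1) * qF p z n
        = ((rr p (n+2) : ℝ) : ℂ) * qF p z (n+2) + (1 - ((rr p (n+2) : ℝ) : ℂ)) :=
      fun n => prod_eq (hrr n).1 (qF_rel p z n)
    have hEq0 : qF p z 0 * qF p z 0 = ((p 2 : ℝ) : ℂ) * qF p z 1 + (1 - ((p 2 : ℝ) : ℂ)) :=
      prod_eq hp2.1 (qF_rel1 p z)
    have grow : ∀ n : ℕ, 1 ≤ a (n+1) * a n → a (n+1) * a n ≤ a (n+2) :=
      fun n h => grow_aux (hrr n).1 (hrr n).2.1 (hEq n) h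
    have back : ∀ n : ℕ, δ * (a (n+2) + 1) - 1 ≤ a (n+1) * a n :=
      fun n => back_aux (hrr n).1 (hrr n).2.1 (hrr n).2.2 (hEq n)
    have grow0 : 1 ≤ a 0 * a 0 → a 0 * a 0 ≤ a 1 :=
      fun h => grow_aux hp2.1 hp2.2.1 hEq0 h
    have back0 : δ * (a 1 + 1) - 1 ≤ a 0 * a 0 :=
      back_aux hp2.1 hp2.2.1 hp2.2.2 hEq0
    -- key bound: δ (t+1) - 1 ≥ γ^5
    have hbt : γ ^ 5 ≤ δ * (t + 1) - 1 := by
      have h1 : γ * (δ * (t + 1) - 1) = γ ^ 8 - (γ - 1) * (1 - δ) := by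
        have h2 : δ * M = γ ^ 8 + 1 - δ := by rw [hγ8]; ring
        calc γ * (δ * (t + 1) - 1) = δ * (t * γ) + δ * γ - γ := by ring
          _ = γ ^ 8 - (γ - 1) * (1 - δ) := by rw [htγ, h2]; ring
      have h3 : (γ - 1) * (1 - δ) ≤ γ - 1 :=
        mul_le_of_le_one_right (by linarith : (0:ℝ) ≤ γ - 1) (by linarith : 1 - δ ≤ 1)
      have hfac : γ ^ 8 - (γ - 1) - γ ^ 6 = (γ - 1) * (γ ^ 7 + γ ^ 6 - 1) := by ring
      have hpos2 : 0 ≤ (γ - 1) * (γ ^ 7 + γ ^ 6 - 1) :=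
        mul_nonneg (by linarith)
          (by linarith [pow_pos hγ0 7, (one_le_pow₀ hγ1.le : (1:ℝ) ≤ γ ^ 6)])
      have h4 : γ ^ 6 ≤ γ ^ 8 - (γ - 1) := by linarith [hfac, hpos2]
      have h5 : γ * γ ^ 5 ≤ γ * (δ * (t + 1) - 1) := by
        rw [h1]
        linarith [h3, h4, show γ * γ ^ 5 = γ ^ 6 from by ring]
      exact le_of_mul_le_mul_left h5 hγ0
    have hγ51 : 1 ≤ γ ^ 5 := one_le_pow₀ hγ1.le
    have hγ41 : 1 ≤ γ ^ 4 := one_le_pow₀ hγ1.le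
    have hγ21 : 1 ≤ γ ^ 2 := one_le_pow₀ hγ1.le
    have ht0 : 0 ≤ t := by linarith
    have han : ∀ n, 0 ≤ a n := fun n => norm_nonneg _
    -- case analysis on m
    rcases m with _ | _ | j
    · -- m = 0
      have ha0' : 1 ≤ a 0 := le_trans ht1 hm.le
      have h1 : 1 ≤ a 0 * a 0 := by
        simpa using mul_le_mul ha0' ha0' zero_le_one (han 0)
      have h2 : a 0 * a 0 ≤ a 1 := grow0 h1
      have hγ2M : γ ^ 2 < M :=
        lt_of_lt_of_le (pow_lt_pow_right₀ hγ1 (by norm_num)) hγ8M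
      have hgg : 0 < γ * γ := mul_pos hγ0 hγ0
      have e1 : t * t * (γ * γ) = M * M := by rw [← htγ]; ring
      have e2 : M * (γ * γ) < M * M := by
        have h := mul_lt_mul_of_pos_left hγ2M hM0
        calc M * (γ * γ) = M * γ ^ 2 := by ring
          _ < M * M := h
      have h4 : M < t * t :=
        lt_of_mul_lt_mul_right (by linarith [e1, e2] : M * (γ * γ) < t * t * (γ * γ)) hgg.le
      have h5 : t * t < a 0 * a 0 := mul_lt_mul'' hm hm ht0 ht0
      linarith [hMn 1, h2, h4, h5]
    · -- m = 1
      have h0 : γ ^ 5 ≤ a 0 * a 0 := by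
        have hb := back0
        have := mul_le_mul_of_nonneg_left hm.le hδ.le
        linarith
      have ha0 : γ ^ 2 ≤ a 0 := by
        have h45 : (γ ^ 2) ^ 2 ≤ (a 0) ^ 2 := by
          calc (γ ^ 2) ^ 2 = γ ^ 4 := by ring
            _ ≤ γ ^ 5 := pow_le_pow_right₀ hγ1.le (by norm_num)
            _ ≤ a 0 * a 0 := h0
            _ = (a 0) ^ 2 := (sq (a 0)).symm
        exact le_of_pow_le_pow_left₀ two_ne_zero (han 0) h45
      have ha1 : 1 ≤ a 1 := le_trans ht1 hm.le
      have ha0' : 1 ≤ a 0 := le_trans hγ21 ha0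
      have hP0 : 1 ≤ a 1 * a 0 := by
        simpa using mul_le_mul ha1 ha0' zero_le_one (le_trans zero_le_one ha1)
      have h2 : t * γ ^ 2 ≤ a 2 :=
        le_trans (mul_le_mul hm.le ha0 (by positivity) (han 1)) (grow 0 hP0)
      have ha2 : 1 ≤ a 2 :=
        le_trans (by simpa using mul_le_mul ht1 hγ21 zero_le_one ht0 : (1:ℝ) ≤ t * γ ^ 2) h2
      have hP1 : 1 ≤ a 2 * a 1 := by
        simpa using mul_le_mul ha2 ha1 zero_le_one (han 2)
      have h3 : t * γ ^ 2 * t ≤ a 3 :=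
        le_trans (mul_le_mul h2 hm.le ht0 (han 2)) (grow 1 hP1)
      have hMM : M * M ≤ a 3 := by
        have hMt : M * M = t * γ ^ 2 * t := by rw [← htγ]; ring
        linarith [hMt ▸ h3]
      have hlt : M < M * M := (lt_mul_iff_one_lt_left hM0).2 hM1
      linarith [hMn 3]
    · -- m = j + 2
      have hb2 : γ ^ 5 ≤ a (j+1) * a j := by
        have hb := back j
        have := mul_le_mul_of_nonneg_left hm.le hδ.le
        linarith
      have hj1 : γ ^ 5 ≤ a (j+1) * M :=
        le_trans hb2 (mul_le_mul_of_nonneg_left (hMn j) (han (j+1)))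
      have hA : γ ^ 5 / M ≤ a (j+1) := (div_le_iff₀ hM0).2 hj1
      have hP1 : γ ^ 4 ≤ a (j+2) * a (j+1) := by
        have h6 : t * (γ ^ 5 / M) ≤ a (j+2) * a (j+1) :=
          mul_le_mul hm.le hA (by positivity) (le_trans ht0 hm.le)
        have h7 : t * (γ ^ 5 / M) = γ ^ 4 := by
          rw [htdef]
          field_simp
        linarith [h7 ▸ h6]
      have h3 : γ ^ 4 ≤ a (j+3) := le_trans hP1 (grow (j+1) (le_trans hγ41 hP1))
      have hP2 : γ ^ 4 * t ≤ a (j+3) * a (j+2) :=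
        mul_le_mul h3 hm.le ht0 (han (j+3))
      have h1t : (1:ℝ) ≤ γ ^ 4 * t := by
        simpa using mul_le_mul hγ41 ht1 zero_le_one (by linarith [hγ41] : (0:ℝ) ≤ γ ^ 4)
      have h4 : γ ^ 4 * t ≤ a (j+4) := le_trans hP2 (grow (j+2) (le_trans h1t hP2))
      have h5 : γ ^ 3 * M ≤ a (j+4) := by
        have h8 : γ ^ 4 * t = γ ^ 3 * M := by rw [← htγ]; ring
        linarith [h8 ▸ h4]
      have hγ31 : 1 < γ ^ 3 := one_lt_pow₀ hγ1 (by norm_num)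
      have hlt : M < γ ^ 3 * M := (lt_mul_iff_one_lt_left hM0).2 hγ31
      exact absurd (le_trans h5 (hMn (j+4))) (not_le.2 hlt)
  exact ⟨⟨2/δ, (one_lt_div hδ).2 (by linarith), main (2/δ) (by linarith)⟩, main⟩
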